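/- arXiv:0903.1433 — 2 statements merged into one kernel-verified Lean document; each statement's English description precedes it below -/
import Mathlib

section
/- Let A > 0 and let h : [0,A] → ℝ be a bounded integrable function that is continuous at 0. Then lim_{ε→0⁺} ε ∫₀^A t^{ε−1} h(t) dt = h(0). -/
open MeasureTheory Filter Set
open scoped ComplexOrder

noncomputable section

/-- ℝⁿ with the Euclidean inner product. -/
abbrev Euc (n : ℕ) := EuclideanSpace ℝ (Fin n)

/-- `N` is the Minkowski functional of an origin-symmetric star body in ℝⁿ:
continuous, positive off the origin, even, and positively homogeneous of degree 1. -/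
def IsMinkowskiFunctional {n : ℕ} (N : Euc n → ℝ) : Prop :=
  Continuous N ∧ (∀ x : Euc n, x ≠ 0 → 0 < N x) ∧ (∀ x : Euc n, N (-x) = N x) ∧
    ∀ (t : ℝ) (x : Euc n), 0 ≤ t → N (t • x) = t * N x

/-- `g : ℝⁿ → ℂ` is a positive definite function: every quadratic form
`∑ᵢⱼ cᵢ c̄ⱼ g(xᵢ - xⱼ)` is a nonnegative (real) number. -/
def IsPosDefFn {n : ℕ} (g : Euc n → ℂ) : Prop :=
  ∀ (m : ℕ) (x : Fin m → Euc n) (c : Fin m → ℂ),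
    0 ≤ ∑ i, ∑ j, c i * (starRingEnd ℂ) (c j) * g (x i - x j)

/-- `(ℝⁿ, N)` embeds in L₀: `ln N x = ∫_{S^{n-1}} ln |⟨x,ξ⟩| dμ(ξ) + C` for `x ≠ 0`,
with `μ` a finite Borel measure on the unit sphere. -/
def EmbedsInL0 {n : ℕ} (N : Euc n → ℝ) : Prop :=
  ∃ (μ : Measure (Metric.sphere (0 : Euc n) 1)) (C : ℝ), IsFiniteMeasure μ ∧
    ∀ x : Euc n, x ≠ 0 →
      Real.log (N x) = (∫ ξ, Real.log |(inner ℝ x (ξ : Euc n) : ℝ)| ∂μ) + C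

/-- The Fourier transform `φ̂(x) = ∫ φ(y) e^{-i⟨x,y⟩} dy` of a Schwartz function. -/
def schwartzFT {n : ℕ} (φ : SchwartzMap (Euc n) ℝ) (x : Euc n) : ℂ :=
  ∫ y : Euc n, Complex.exp (-Complex.I * ((inner ℝ x y : ℝ) : ℂ)) * (φ y : ℂ)

/-- `N` is a norm on ℝⁿ. -/
def IsNormOn {n : ℕ} (N : Euc n → ℝ) : Prop :=
  (∀ x : Euc n, N x = 0 ↔ x = 0) ∧ (∀ (a : ℝ) (x : Euc n), N (a • x) = |a| * N x) ∧
    ∀ x y : Euc n, N (x + y) ≤ N x + N y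

lemma rpow_int_Ioo (b ε : ℝ) (hb : 0 < b) (hε : 0 < ε) :
    ∫ t in Set.Ioo (0:ℝ) b, t ^ (ε - 1) = b ^ ε / ε := by
  rw [← MeasureTheory.integral_Ioc_eq_integral_Ioo,
    ← intervalIntegral.integral_of_le hb.le,
    integral_rpow (Or.inl (by linarith)), sub_add_cancel,
    Real.zero_rpow hε.ne', sub_zero]

lemma int_rpow_Ioo (b ε : ℝ) (hε : 0 < ε) :
    IntegrableOn (fun t : ℝ => t ^ (ε - 1)) (Set.Ioo (0:ℝ) b) := by
  rcases le_or_gt b 0 with hb | hb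
  · rw [Set.Ioo_eq_empty (by intro hlt; exact absurd (hlt.trans_le hb) (lt_irrefl 0))]
    simp
  · have := (intervalIntegral.intervalIntegrable_rpow' (a := 0) (b := b)
      (r := ε - 1) (by linarith))
    rw [intervalIntegrable_iff_integrableOn_Ioc_of_le hb.le] at this
    exact this.mono_set Set.Ioo_subset_Ioc_self

lemma int_mul_Ioo (b ε M : ℝ) (hε : 0 < ε) (g : ℝ → ℝ)
    (hm : AEStronglyMeasurable g (volume.restrict (Set.Ioo (0:ℝ) b)))
    (hbd : ∀ t ∈ Set.Ioo (0:ℝ) b, |g t| ≤ M) :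
    IntegrableOn (fun t => t ^ (ε - 1) * g t) (Set.Ioo (0:ℝ) b) := by
  apply Integrable.mono' ((int_rpow_Ioo b ε hε).const_mul M)
  · have hco : ContinuousOn (fun t : ℝ => t ^ (ε - 1)) (Set.Ioo (0:ℝ) b) := fun x hx =>
      (Real.continuousAt_rpow_const x (ε - 1) (Or.inl (ne_of_gt hx.1))).continuousWithinAt
    exact (hco.aestronglyMeasurable measurableSet_Ioo).mul hm
  · rw [ae_restrict_iff' measurableSet_Ioo]
    filter_upwards with t ht
    have h1 : (0:ℝ) ≤ t ^ (ε - 1) := Real.rpow_nonneg ht.1.le _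
    have h2 := hbd t ht
    rw [Real.norm_eq_abs, abs_mul, abs_of_nonneg h1]
    calc t ^ (ε - 1) * |g t| ≤ t ^ (ε - 1) * M := by
          exact mul_le_mul_of_nonneg_left h2 h1
      _ = M * t ^ (ε - 1) := mul_comm _ _

/-- Lemma 2: if `h` is bounded and integrable on `[0,A]` and continuous at `0`, then
`ε ∫₀^A t^{ε-1} h(t) dt → h(0)` as `ε → 0⁺`. -/
theorem statement5 (A : ℝ) (hA : 0 < A) (h : ℝ → ℝ)
    (hbd : ∃ M : ℝ, ∀ t ∈ Set.Icc (0 : ℝ) A, |h t| ≤ M)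
    (hint : IntegrableOn h (Set.Ioo (0 : ℝ) A))
    (hcont : ContinuousWithinAt h (Set.Ici (0 : ℝ)) 0) :
    Tendsto (fun ε : ℝ => ε * ∫ t in Set.Ioo (0 : ℝ) A, t ^ (ε - 1) * h t)
      (nhdsWithin (0 : ℝ) (Set.Ioi 0)) (nhds (h 0)) := by
  obtain ⟨M, hM⟩ := hbd
  set h0 := h 0 with hh0
  set M' : ℝ := M + |h0| + 1 with hM'def
  have hM0 : 0 ≤ M := le_trans (abs_nonneg _) (hM 0 ⟨le_refl 0, hA.le⟩)
  have hM'pos : 0 < M' := by positivity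
  have hsm : AEStronglyMeasurable (fun t => h t - h0)
      (volume.restrict (Set.Ioo (0:ℝ) A)) :=
    hint.aestronglyMeasurable.sub aestronglyMeasurable_const
  have hbd2 : ∀ t ∈ Set.Ioo (0:ℝ) A, |h t - h0| ≤ M' := by
    intro t ht
    have h1 := hM t ⟨ht.1.le, ht.2.le⟩
    calc |h t - h0| ≤ |h t| + |h0| := abs_sub _ _
      _ ≤ M' := by rw [hM'def]; linarith
  -- key limit: centered integral tends to 0
  have key : Tendsto (fun ε : ℝ => ε * ∫ t in Set.Ioo (0:ℝ) A, t ^ (ε - 1) * (h t - h0))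
      (nhdsWithin 0 (Set.Ioi 0)) (nhds 0) := by
    rw [Metric.tendsto_nhdsWithin_nhds]
    intro δ hδ
    rw [Metric.continuousWithinAt_iff] at hcont
    obtain ⟨r0, hr0, hr0'⟩ := hcont (δ/4) (by linarith)
    set r : ℝ := min (min r0 1) (A/2) with hrdef
    have hr : 0 < r := lt_min (lt_min hr0 one_pos) (by linarith)
    have hrA : r < A := lt_of_le_of_lt (min_le_right _ _) (by linarith)
    have hr1 : r ≤ 1 := le_trans (min_le_left _ _) (min_le_right _ _)
    have hrr0 : r ≤ r0 := le_trans (min_le_left _ _) (min_le_left _ _)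
    refine ⟨min 1 (δ * r / (4 * M' * A)), lt_min one_pos (by positivity), ?_⟩
    intro ε hε hεd
    have hεpos : 0 < ε := hε
    rw [Real.dist_eq, sub_zero, abs_of_pos hεpos] at hεd
    have hε1 : ε ≤ 1 := le_of_lt (lt_of_lt_of_le hεd (min_le_left _ _))
    have hε2 : ε < δ * r / (4 * M' * A) := lt_of_lt_of_le hεd (min_le_right _ _)
    set f : ℝ → ℝ := fun t => t ^ (ε - 1) * (h t - h0) with hfdef
    have hfA : IntegrableOn f (Set.Ioo (0:ℝ) A) :=
      int_mul_Ioo A ε M' hεpos _ hsm hbd2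
    have hsub1 : Set.Ioo (0:ℝ) r ⊆ Set.Ioo (0:ℝ) A := Set.Ioo_subset_Ioo_right hrA.le
    have hsub2 : Set.Ico r A ⊆ Set.Ioo (0:ℝ) A := fun x hx => ⟨hr.trans_le hx.1, hx.2⟩
    have hf1 : IntegrableOn f (Set.Ioo (0:ℝ) r) := hfA.mono_set hsub1
    have hf2 : IntegrableOn f (Set.Ico r A) := hfA.mono_set hsub2
    have hdisj : Disjoint (Set.Ioo (0:ℝ) r) (Set.Ico r A) := by
      rw [Set.disjoint_left]
      rintro x ⟨_, h2⟩ ⟨h3, _⟩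
      exact absurd h3 (not_le.mpr h2)
    have hsplit : ∫ t in Set.Ioo (0:ℝ) A, f t
        = (∫ t in Set.Ioo (0:ℝ) r, f t) + ∫ t in Set.Ico r A, f t := by
      rw [← Set.Ioo_union_Ico_eq_Ioo hr hrA.le,
        setIntegral_union hdisj measurableSet_Ico hf1 hf2]
    -- bound on (0, r)
    have hI1 : |∫ t in Set.Ioo (0:ℝ) r, f t| ≤ (δ/4) * (r ^ ε / ε) := by
      have hb : |∫ t in Set.Ioo (0:ℝ) r, f t|
          ≤ ∫ t in Set.Ioo (0:ℝ) r, (δ/4) * t ^ (ε - 1) := by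
        rw [← Real.norm_eq_abs]
        apply norm_integral_le_of_norm_le ((int_rpow_Ioo r ε hεpos).const_mul (δ/4))
        rw [ae_restrict_iff' measurableSet_Ioo]
        filter_upwards with t ht
        have h1 : (0:ℝ) ≤ t ^ (ε - 1) := Real.rpow_nonneg ht.1.le _
        have h2 : |h t - h0| ≤ δ/4 := by
          have := hr0' (show t ∈ Set.Ici (0:ℝ) from ht.1.le)
            (by rw [Real.dist_eq, sub_zero, abs_of_pos ht.1]; exact ht.2.trans_le hrr0)
          rw [Real.dist_eq] at this
          exact this.le
        rw [hfdef, Real.norm_eq_abs, abs_mul, abs_of_nonneg h1]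
        calc t ^ (ε - 1) * |h t - h0| ≤ t ^ (ε - 1) * (δ/4) :=
              mul_le_mul_of_nonneg_left h2 h1
          _ = δ/4 * t ^ (ε - 1) := mul_comm _ _
      rwa [integral_const_mul, rpow_int_Ioo r ε hr hεpos] at hb
    -- bound on [r, A)
    have hI2 : |∫ t in Set.Ico r A, f t| ≤ (r ^ (ε - 1) * M') * A := by
      have hvol : volume (Set.Ico r A) < ⊤ := by
        rw [Real.volume_Ico]; exact ENNReal.ofReal_lt_top
      have hb := MeasureTheory.norm_setIntegral_le_of_norm_le_const (μ := volume)
        (f := f) (C := r ^ (ε - 1) * M') hvol ?_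
      · rw [Real.norm_eq_abs] at hb
        refine hb.trans ?_
        have : (volume (Set.Ico r A)).toReal ≤ A := by
          rw [Real.volume_Ico, ENNReal.toReal_ofReal (by linarith)]; linarith
        have hC : (0:ℝ) ≤ r ^ (ε - 1) * M' :=
          mul_nonneg (Real.rpow_nonneg hr.le _) hM'pos.le
        exact mul_le_mul_of_nonneg_left this hC
      · intro x hx
        have hx0 : 0 < x := hr.trans_le hx.1
        have h1 : x ^ (ε - 1) ≤ r ^ (ε - 1) :=
          Real.rpow_le_rpow_of_nonpos hr hx.1 (by linarith)
        have h2 : |h x - h0| ≤ M' := hbd2 x (hsub2 hx)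
        rw [hfdef, Real.norm_eq_abs, abs_mul, abs_of_nonneg (Real.rpow_nonneg hx0.le _)]
        have hxnn : (0:ℝ) ≤ x ^ (ε - 1) := Real.rpow_nonneg hx0.le _
        exact mul_le_mul h1 h2 (abs_nonneg _) (Real.rpow_nonneg hr.le _)
    -- combine
    rw [Real.dist_eq, sub_zero, hsplit]
    have e1 : ε * |(∫ t in Set.Ioo (0:ℝ) r, f t)| ≤ δ/4 := by
      calc ε * |(∫ t in Set.Ioo (0:ℝ) r, f t)| ≤ ε * ((δ/4) * (r ^ ε / ε)) :=
            mul_le_mul_of_nonneg_left hI1 hεpos.le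
        _ = (δ/4) * r ^ ε := by field_simp
        _ ≤ δ/4 * 1 := by
            have := Real.rpow_le_one hr.le hr1 hεpos.le
            nlinarith
        _ = δ/4 := mul_one _
    have e2 : ε * |(∫ t in Set.Ico r A, f t)| < δ/2 := by
      have hrinv : r ^ (ε - 1) ≤ r⁻¹ := by
        have := Real.rpow_le_rpow_of_exponent_ge hr hr1 (show (-1:ℝ) ≤ ε - 1 by linarith)
        rwa [Real.rpow_neg_one] at this
      calc ε * |(∫ t in Set.Ico r A, f t)| ≤ ε * ((r ^ (ε - 1) * M') * A) :=
            mul_le_mul_of_nonneg_left hI2 hεpos.le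
        _ ≤ ε * ((r⁻¹ * M') * A) := by
            have : r ^ (ε - 1) * M' * A ≤ r⁻¹ * M' * A :=
              mul_le_mul_of_nonneg_right
                (mul_le_mul_of_nonneg_right hrinv hM'pos.le) hA.le
            exact mul_le_mul_of_nonneg_left this hεpos.le
        _ < (δ * r / (4 * M' * A)) * ((r⁻¹ * M') * A) := by
            have hpos : (0:ℝ) < r⁻¹ * M' * A := by positivity
            exact mul_lt_mul_of_pos_right hε2 hpos
        _ = δ/4 := by field_simp
        _ < δ/2 := by linarith
    calc |ε * ((∫ t in Set.Ioo (0:ℝ) r, f t) + ∫ t in Set.Ico r A, f t)|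
        = |ε * (∫ t in Set.Ioo (0:ℝ) r, f t) + ε * ∫ t in Set.Ico r A, f t| := by
          rw [mul_add]
      _ ≤ |ε * (∫ t in Set.Ioo (0:ℝ) r, f t)| + |ε * ∫ t in Set.Ico r A, f t| :=
          abs_add_le _ _
      _ = ε * |(∫ t in Set.Ioo (0:ℝ) r, f t)| + ε * |(∫ t in Set.Ico r A, f t)| := by
          rw [abs_mul, abs_mul, abs_of_pos hεpos]
      _ < δ := by linarith
  -- A^ε → 1
  have hA1 : Tendsto (fun ε : ℝ => h0 * A ^ ε) (nhdsWithin 0 (Set.Ioi 0)) (nhds h0) := by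
    have heq : (fun ε : ℝ => A ^ ε) = fun ε : ℝ => Real.exp (Real.log A * ε) :=
      funext fun ε => Real.rpow_def_of_pos hA ε
    have hc : Tendsto (fun ε : ℝ => A ^ ε) (nhds 0) (nhds 1) := by
      rw [heq]
      have : Continuous fun ε : ℝ => Real.exp (Real.log A * ε) := by continuity
      have h2 := this.tendsto 0
      simpa using h2
    have := (tendsto_const_nhds (x := h0)).mul hc
    rw [mul_one] at this
    exact this.mono_left nhdsWithin_le_nhds
  -- combine
  have hfinal := key.add hA1
  rw [zero_add] at hfinal
  apply hfinal.congr'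
  filter_upwards [self_mem_nhdsWithin] with ε hε
  have hεpos : (0:ℝ) < ε := hε
  have hint1 : IntegrableOn (fun t => t ^ (ε - 1) * (h t - h0)) (Set.Ioo (0:ℝ) A) :=
    int_mul_Ioo A ε M' hεpos _ hsm hbd2
  have hint2 := int_rpow_Ioo A ε hεpos
  have he : ∫ t in Set.Ioo (0:ℝ) A, t ^ (ε - 1) * h t
      = (∫ t in Set.Ioo (0:ℝ) A, t ^ (ε - 1) * (h t - h0))
        + h0 * (A ^ ε / ε) := by
    have hcongr : ∫ t in Set.Ioo (0:ℝ) A, t ^ (ε - 1) * h t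
        = ∫ t in Set.Ioo (0:ℝ) A, (t ^ (ε - 1) * (h t - h0) + h0 * t ^ (ε - 1)) := by
      congr 1; funext t; ring
    rw [hcongr, integral_add hint1 (hint2.const_mul h0), integral_const_mul,
      rpow_int_Ioo A ε hA hεpos]
  rw [he]
  field_simp
end
end

section
/- Let n ≥ 2, let ‖·‖ be the Minkowski functional of an origin-symmetric star body in ℝⁿ, let μ be a Borel probability measure on ℝⁿ, and let f : ℝ → ℝ be an even continuous function with f(0) = 1 such that f(‖a‖) = ∫_{ℝⁿ} e^{i⟨a,x⟩} dμ(x) for all a ∈ ℝⁿ. Define ψ(ε) := ε ∫_{1/ε}^∞ t^{−1−ε} f(t) dt for ε ∈ (0,1). If ψ(ε) → 1 as ε → 0⁺, then μ is the Dirac measure at the origin, i.e., μ({0}) = 1 (and consequently f(‖a‖) = 1 for all a). -/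
open MeasureTheory Filter Set
open scoped ComplexOrder

noncomputable section

private lemma eps_rpow_tendsto : Tendsto (fun ε : ℝ => ε ^ ε) (nhdsWithin 0 (Ioi 0)) (nhds 1) := by
  have h1 : Tendsto (fun ε : ℝ => ε * Real.log ε) (nhdsWithin 0 (Ioi 0)) (nhds 0) := by
    have h := Real.continuous_mul_log.tendsto 0
    simp only [zero_mul] at h
    exact h.mono_left nhdsWithin_le_nhds
  have h2 := (Real.continuous_exp.tendsto 0).comp h1
  rw [Real.exp_zero] at h2
  refine h2.congr' ?_
  filter_upwards [self_mem_nhdsWithin] with ε hε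
  simp only [Function.comp]
  rw [Real.rpow_def_of_pos hε, mul_comm]

private lemma sin_div_le {u s : ℝ} (hs : s ≠ 0) : |Real.sin u| / |s| ≤ 1 / |s| := by
  gcongr
  exact Real.abs_sin_le_one _

private lemma cos_int_integrable {ε s c : ℝ} (hε : 0 < ε) (hc : 0 < c) :
    IntegrableOn (fun t : ℝ => t ^ (-1 - ε) * Real.cos (t * s)) (Ioi c) := by
  have hp : (-1 - ε : ℝ) < -1 := by linarith
  refine Integrable.mono' (integrableOn_Ioi_rpow_of_lt hp hc) ?_ ?_
  · refine ContinuousOn.aestronglyMeasurable ?_ measurableSet_Ioi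
    refine ContinuousOn.mul
      (ContinuousOn.rpow_const continuousOn_id fun t ht => Or.inl (ne_of_gt (hc.trans ht))) ?_
    exact (Real.continuous_cos.comp (continuous_id.mul continuous_const)).continuousOn
  · filter_upwards [ae_restrict_mem measurableSet_Ioi] with t ht
    have h0 : (0:ℝ) ≤ t ^ (-1 - ε) := Real.rpow_nonneg (le_of_lt (hc.trans ht)) _
    rw [norm_mul, Real.norm_eq_abs, Real.norm_eq_abs, abs_of_nonneg h0]
    calc t ^ (-1-ε) * |Real.cos (t*s)| ≤ t ^ (-1-ε) * 1 :=
          mul_le_mul_of_nonneg_left (Real.abs_cos_le_one _) h0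
      _ = t ^ (-1-ε) := mul_one _

private lemma osc_bound {ε s c : ℝ} (hε : 0 < ε) (hc : 0 < c) (hs : s ≠ 0) :
    |∫ t in Ioi c, t ^ (-1 - ε) * Real.cos (t * s)| ≤ 2 * c ^ (-1 - ε) / |s| := by
  have hslt : 0 < |s| := abs_pos.mpr hs
  have hq : (-2 - ε : ℝ) < -1 := by linarith
  have hp : (-1 - ε : ℝ) < -1 := by linarith
  have hrint2 : IntegrableOn (fun t : ℝ => t ^ (-2 - ε)) (Ioi c) :=
    integrableOn_Ioi_rpow_of_lt hq hc
  have hI1 : IntegrableOn (fun t : ℝ => t ^ (-1 - ε) * Real.cos (t * s)) (Ioi c) :=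
    cos_int_integrable hε hc
  have hI2 : IntegrableOn (fun t : ℝ => t ^ (-2 - ε) * (Real.sin (t * s) / s)) (Ioi c) := by
    refine Integrable.mono' (hrint2.div_const |s|) ?_ ?_
    · refine ContinuousOn.aestronglyMeasurable ?_ measurableSet_Ioi
      refine ContinuousOn.mul
        (ContinuousOn.rpow_const continuousOn_id fun t ht => Or.inl (ne_of_gt (hc.trans ht))) ?_
      exact ((Real.continuous_sin.comp (continuous_id.mul continuous_const)).div_const s).continuousOn
    · filter_upwards [ae_restrict_mem measurableSet_Ioi] with t ht
      have h0 : (0:ℝ) ≤ t ^ (-2 - ε) := Real.rpow_nonneg (le_of_lt (hc.trans ht)) _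
      rw [norm_mul, Real.norm_eq_abs, Real.norm_eq_abs, abs_of_nonneg h0, abs_div]
      calc t ^ (-2-ε) * (|Real.sin (t*s)| / |s|) ≤ t ^ (-2-ε) * (1/|s|) :=
            mul_le_mul_of_nonneg_left (sin_div_le hs) h0
        _ = t ^ (-2-ε) / |s| := by rw [mul_one_div]
  have hderiv : ∀ t ∈ Ici c, HasDerivAt (fun u : ℝ => u ^ (-1-ε) * (Real.sin (u*s)/s))
      ((-1-ε) * (t ^ (-2-ε) * (Real.sin (t*s)/s)) + t ^ (-1-ε) * Real.cos (t*s)) t := by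
    intro t ht
    have htpos : 0 < t := lt_of_lt_of_le hc ht
    have h1 : HasDerivAt (fun u : ℝ => u ^ (-1-ε)) ((-1-ε) * t ^ (-2-ε)) t := by
      have h := Real.hasDerivAt_rpow_const (x := t) (p := -1-ε) (Or.inl htpos.ne')
      simpa [show (-1-ε) - 1 = (-2-ε) by ring] using h
    have h2 : HasDerivAt (fun u : ℝ => Real.sin (u*s)/s) (Real.cos (t*s)) t := by
      have h3 : HasDerivAt (fun u : ℝ => u * s) s t := by
        simpa using (hasDerivAt_id t).mul_const s
      have h4 := ((Real.hasDerivAt_sin (t*s)).comp t h3).div_const s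
      simpa [mul_div_assoc, mul_div_cancel_right₀ _ hs] using h4
    have h5 := h1.mul h2
    exact h5.congr_deriv (by ring)
  have htend : Tendsto (fun t : ℝ => t ^ (-1-ε) * (Real.sin (t*s)/s)) atTop (nhds 0) := by
    refine squeeze_zero_norm' (a := fun t : ℝ => t ^ (-1-ε) / |s|) ?_ ?_
    · filter_upwards [eventually_gt_atTop (0:ℝ)] with t ht
      rw [norm_mul, Real.norm_eq_abs, Real.norm_eq_abs,
        abs_of_nonneg (Real.rpow_nonneg ht.le _), abs_div]
      calc t ^ (-1-ε) * (|Real.sin (t*s)| / |s|) ≤ t ^ (-1-ε) * (1/|s|) :=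
            mul_le_mul_of_nonneg_left (sin_div_le hs) (Real.rpow_nonneg ht.le _)
        _ = t ^ (-1-ε) / |s| := by rw [mul_one_div]
    · have h := (tendsto_rpow_neg_atTop (by linarith : (0:ℝ) < 1 + ε)).div_const |s|
      simpa [show -(1+ε) = -1-ε by ring] using h
  have hIBP := integral_Ioi_of_hasDerivAt_of_tendsto' hderiv
    ((hI2.const_mul (-1-ε)).add hI1) htend
  have hsplit := integral_add (μ := volume.restrict (Ioi c)) (hI2.const_mul (-1-ε)) hI1
  have h6 : ∫ t in Ioi c, (-1-ε) * (t ^ (-2-ε) * (Real.sin (t*s)/s))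
      = (-1-ε) * ∫ t in Ioi c, t ^ (-2-ε) * (Real.sin (t*s)/s) := integral_const_mul _ _
  have heq : ∫ t in Ioi c, t ^ (-1-ε) * Real.cos (t*s)
      = (0 - c ^ (-1-ε) * (Real.sin (c*s)/s))
        - (-1-ε) * ∫ t in Ioi c, t ^ (-2-ε) * (Real.sin (t*s)/s) := by
    rw [hsplit, h6] at hIBP
    linarith
  have hb1 : |0 - c ^ (-1-ε) * (Real.sin (c*s)/s)| ≤ c ^ (-1-ε) / |s| := by
    rw [zero_sub, abs_neg, abs_mul, abs_of_nonneg (Real.rpow_nonneg hc.le _), abs_div]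
    calc c ^ (-1-ε) * (|Real.sin (c*s)| / |s|) ≤ c ^ (-1-ε) * (1/|s|) :=
          mul_le_mul_of_nonneg_left (sin_div_le hs) (Real.rpow_nonneg hc.le _)
      _ = c ^ (-1-ε) / |s| := by rw [mul_one_div]
  have hb2 : |∫ t in Ioi c, t ^ (-2-ε) * (Real.sin (t*s)/s)| ≤ c ^ (-1-ε) / ((1+ε) * |s|) := by
    have hnb : ‖∫ t in Ioi c, t ^ (-2-ε) * (Real.sin (t*s)/s)‖
        ≤ ∫ t in Ioi c, t ^ (-2-ε) / |s| := by
      refine norm_integral_le_of_norm_le (hrint2.div_const |s|) ?_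
      filter_upwards [ae_restrict_mem measurableSet_Ioi] with t ht
      have h0 : (0:ℝ) ≤ t ^ (-2 - ε) := Real.rpow_nonneg (le_of_lt (hc.trans ht)) _
      rw [norm_mul, Real.norm_eq_abs, Real.norm_eq_abs, abs_of_nonneg h0, abs_div]
      calc t ^ (-2-ε) * (|Real.sin (t*s)| / |s|) ≤ t ^ (-2-ε) * (1/|s|) :=
            mul_le_mul_of_nonneg_left (sin_div_le hs) h0
        _ = t ^ (-2-ε) / |s| := by rw [mul_one_div]
    rw [Real.norm_eq_abs] at hnb
    refine hnb.trans (le_of_eq ?_)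
    rw [integral_div, integral_Ioi_rpow_of_lt hq hc,
      show (-2-ε+1 : ℝ) = -1-ε by ring,
      show (-1-ε : ℝ) = -(1+ε) by ring, neg_div_neg_eq, div_div]
  rw [heq]
  calc |(0 - c ^ (-1-ε) * (Real.sin (c*s)/s))
        - (-1-ε) * ∫ t in Ioi c, t ^ (-2-ε) * (Real.sin (t*s)/s)|
      ≤ |0 - c ^ (-1-ε) * (Real.sin (c*s)/s)|
        + |(-1-ε) * ∫ t in Ioi c, t ^ (-2-ε) * (Real.sin (t*s)/s)| := abs_sub _ _
    _ ≤ c ^ (-1-ε) / |s| + (1+ε) * (c ^ (-1-ε) / ((1+ε) * |s|)) := by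
        refine add_le_add hb1 ?_
        rw [abs_mul, show |(-1-ε : ℝ)| = 1+ε by rw [abs_of_nonpos (by linarith)]; ring]
        exact mul_le_mul_of_nonneg_left hb2 (by positivity)
    _ = 2 * c ^ (-1-ε) / |s| := by
        have h1ε : (1+ε : ℝ) ≠ 0 := by positivity
        field_simp
        ring

private lemma osc_bound' {ε s : ℝ} (hε : 0 < ε) (hε1 : ε ≤ 1) (hs : s ≠ 0) :
    |∫ t in Ioi (1/ε), t ^ (-1 - ε) * Real.cos (t * s)| ≤ 2 * ε / |s| := by
  have h := osc_bound hε (by positivity : (0:ℝ) < 1/ε) hs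
  refine h.trans ?_
  have h2 : (1/ε : ℝ) ^ (-1-ε) = ε ^ (1+ε) := by
    rw [one_div, Real.inv_rpow hε.le, ← Real.rpow_neg hε.le, show -(-1-ε) = 1+ε by ring]
  have h3 : (ε : ℝ) ^ (1+ε) ≤ ε := by
    calc ε ^ (1+ε) ≤ ε ^ (1:ℝ) :=
          Real.rpow_le_rpow_of_exponent_ge hε hε1 (by linarith)
      _ = ε := Real.rpow_one ε
  rw [h2]
  gcongr

private lemma int_rpow_Ioi {ε : ℝ} (hε : 0 < ε) :
    ∫ t in Ioi (1/ε), t ^ (-1 - ε) = ε ^ ε / ε := by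
  rw [integral_Ioi_rpow_of_lt (by linarith) (by positivity),
    show (-1 - ε + 1 : ℝ) = -ε by ring]
  have h1 : (1/ε : ℝ) ^ (-ε) = ε ^ ε := by
    rw [one_div, Real.inv_rpow hε.le, ← Real.rpow_neg hε.le, neg_neg]
  rw [h1, neg_div_neg_eq]

/-- If `f(N ·)` is the characteristic functional of a probability measure `μ` and
`ψ(ε) = ε ∫_{1/ε}^∞ t^{-1-ε} f(t) dt → 1` as `ε → 0⁺`, then `μ` is the unit atom at
the origin. -/
theorem statement8 {n : ℕ} (hn : 2 ≤ n) (N : Euc n → ℝ)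
    (hN : IsMinkowskiFunctional N)
    (μ : Measure (Euc n)) [IsProbabilityMeasure μ] (f : ℝ → ℝ)
    (hf_even : ∀ t : ℝ, f (-t) = f t) (hf_cont : Continuous f) (hf0 : f 0 = 1)
    (hchar : ∀ a : Euc n,
      (f (N a) : ℂ) = ∫ x : Euc n, Complex.exp (Complex.I * ((inner ℝ a x : ℝ) : ℂ)) ∂μ)
    (hψ : Tendsto (fun ε : ℝ => ε * ∫ t in Set.Ioi (1 / ε), t ^ (-1 - ε) * f t)
      (nhdsWithin (0 : ℝ) (Set.Ioi 0)) (nhds 1)) :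
    μ {0} = 1 := by
  obtain ⟨hNc, hNpos, hNsymm, hNhom⟩ := hN
  have hεε := eps_rpow_tendsto
  -- Step 1 : for every `b` with `N b = 1` and every `c > 0`,  μ {x | c ≤ |⟨b,x⟩|} = 0.
  have key : ∀ b : Euc n, N b = 1 → ∀ c : ℝ, 0 < c →
      μ {x : Euc n | c ≤ |(inner ℝ b x : ℝ)|} = 0 := by
    intro b hNb c hc
    set S : Euc n → ℝ := fun x => (inner ℝ b x : ℝ) with hS
    have hScont : Continuous S := Continuous.inner continuous_const continuous_id
    have hμA_ne : μ {x : Euc n | c ≤ |S x|} ≠ ⊤ := measure_ne_top μ _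
    have hAmeas : MeasurableSet {x : Euc n | c ≤ |S x|} :=
      (isClosed_le continuous_const hScont.abs).measurableSet
    -- the characteristic function as a cosine integral
    have hfcos : ∀ t : ℝ, 0 ≤ t → f t = ∫ x, Real.cos (t * S x) ∂μ := by
      intro t ht
      have h1 := hchar (t • b)
      have hNt : N (t • b) = t := by rw [hNhom t b ht, hNb, mul_one]
      rw [hNt] at h1
      have hintc : Integrable
          (fun x : Euc n => Complex.exp (Complex.I * ((inner ℝ (t • b) x : ℝ) : ℂ))) μ := by
        refine Integrable.mono' (integrable_const 1) ?_ ?_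
        · refine Continuous.aestronglyMeasurable ?_
          exact Complex.continuous_exp.comp (continuous_const.mul
            (Complex.continuous_ofReal.comp (Continuous.inner continuous_const continuous_id)))
        · filter_upwards with x
          rw [mul_comm, Complex.norm_exp_ofReal_mul_I]
      have h2 := congrArg Complex.re h1
      rw [Complex.ofReal_re] at h2
      have h3 := integral_re (𝕜 := ℂ) hintc
      simp only [RCLike.re_to_complex] at h3
      rw [h2, ← h3]
      congr 1
      funext x
      rw [mul_comm, Complex.exp_ofReal_mul_I_re, real_inner_smul_left]
    -- Step 1a : quantitative inequality for every ε ∈ (0,1)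
    have hKey : ∀ ε : ℝ, ε ∈ Ioo (0:ℝ) 1 →
        (ε ^ ε - ε * (2 * ε / c)) * (μ {x : Euc n | c ≤ |S x|}).toReal
          ≤ ε ^ ε - ε * ∫ t in Ioi (1/ε), t ^ (-1 - ε) * f t := by
      intro ε hεm
      obtain ⟨hε0, hε1⟩ := hεm
      have hc0 : (0:ℝ) < 1/ε := by positivity
      have hpl : (-1 - ε : ℝ) < -1 := by linarith
      -- product integrability
      have hprodmeas : AEStronglyMeasurable
          (fun z : ℝ × Euc n => z.1 ^ (-1-ε) * Real.cos (z.1 * S z.2))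
          ((volume.restrict (Ioi (1/ε))).prod μ) := by
        rw [show μ = μ.restrict univ from (Measure.restrict_univ).symm, Measure.prod_restrict]
        refine ContinuousOn.aestronglyMeasurable ?_ (measurableSet_Ioi.prod MeasurableSet.univ)
        refine ContinuousOn.mul ?_ ?_
        · refine ContinuousOn.rpow_const (continuous_fst.continuousOn) ?_
          rintro ⟨t, x⟩ ⟨ht, -⟩
          exact Or.inl (ne_of_gt (hc0.trans ht))
        · exact (Real.continuous_cos.comp
            (continuous_fst.mul (hScont.comp continuous_snd))).continuousOn
      have haefst : ∀ᵐ z ∂((volume.restrict (Ioi (1/ε))).prod μ), z.1 ∈ Ioi (1/ε) := by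
        rw [show μ = μ.restrict univ from (Measure.restrict_univ).symm, Measure.prod_restrict]
        filter_upwards [ae_restrict_mem (measurableSet_Ioi.prod MeasurableSet.univ)] with z hz
        exact hz.1
      have hbnd : Integrable (fun z : ℝ × Euc n => z.1 ^ (-1-ε))
          ((volume.restrict (Ioi (1/ε))).prod μ) := by
        have h := Integrable.mul_prod (integrableOn_Ioi_rpow_of_lt hpl hc0)
          (integrable_const (1:ℝ) (μ := μ))
        simpa using h
      have hGint : Integrable (fun z : ℝ × Euc n => z.1 ^ (-1-ε) * Real.cos (z.1 * S z.2))
          ((volume.restrict (Ioi (1/ε))).prod μ) := by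
        refine Integrable.mono' hbnd hprodmeas ?_
        filter_upwards [haefst] with z hz
        have h0 : (0:ℝ) ≤ z.1 ^ (-1-ε) := Real.rpow_nonneg (le_of_lt (hc0.trans hz)) _
        rw [norm_mul, Real.norm_eq_abs, Real.norm_eq_abs, abs_of_nonneg h0]
        calc z.1 ^ (-1-ε) * |Real.cos (z.1 * S z.2)| ≤ z.1 ^ (-1-ε) * 1 :=
              mul_le_mul_of_nonneg_left (Real.abs_cos_le_one _) h0
          _ = z.1 ^ (-1-ε) := mul_one _
      set Φ : Euc n → ℝ := fun x => ∫ t in Ioi (1/ε), t ^ (-1-ε) * Real.cos (t * S x) with hΦ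
      have hswap : ∫ t in Ioi (1/ε), t ^ (-1-ε) * f t = ∫ x, Φ x ∂μ := by
        have h1 : ∫ t in Ioi (1/ε), t ^ (-1-ε) * f t
            = ∫ t in Ioi (1/ε), ∫ x, t ^ (-1-ε) * Real.cos (t * S x) ∂μ := by
          refine setIntegral_congr_fun measurableSet_Ioi fun t ht => ?_
          rw [hfcos t (le_of_lt (hc0.trans ht))]
          exact (integral_const_mul _ _).symm
        rw [h1]
        exact integral_integral_swap hGint
      have hΦint : Integrable Φ μ := hGint.integral_prod_right
      have hK : ∫ t in Ioi (1/ε), t ^ (-1-ε) = ε ^ ε / ε := int_rpow_Ioi hε0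
      have hΦle : ∀ x, Φ x ≤ ε ^ ε / ε := by
        intro x
        rw [← hK]
        refine setIntegral_mono_on (cos_int_integrable hε0 hc0)
          (integrableOn_Ioi_rpow_of_lt hpl hc0) measurableSet_Ioi ?_
        intro t ht
        have h0 : (0:ℝ) ≤ t ^ (-1-ε) := Real.rpow_nonneg (le_of_lt (hc0.trans ht)) _
        calc t ^ (-1-ε) * Real.cos (t * S x) ≤ t ^ (-1-ε) * 1 :=
              mul_le_mul_of_nonneg_left (Real.cos_le_one _) h0
          _ = t ^ (-1-ε) := mul_one _
      have hstep1 : (ε^ε/ε - 2*ε/c) * (μ {x : Euc n | c ≤ |S x|}).toReal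
          ≤ ∫ x, (ε^ε/ε - Φ x) ∂μ := by
        have h4 : ∫ x in {x : Euc n | c ≤ |S x|}, (ε^ε/ε - Φ x) ∂μ
            ≤ ∫ x, (ε^ε/ε - Φ x) ∂μ := by
          refine setIntegral_le_integral ((integrable_const _).sub hΦint) ?_
          filter_upwards with x
          simp only [Pi.zero_apply, sub_nonneg]
          exact hΦle x
        refine le_trans ?_ h4
        refine le_trans (le_of_eq ?_) (setIntegral_ge_of_const_le hAmeas hμA_ne
          (?_ : ∀ x ∈ {x : Euc n | c ≤ |S x|}, ε^ε/ε - 2*ε/c ≤ ε^ε/ε - Φ x)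
          (((integrable_const _).sub hΦint).integrableOn))
        · rw [smul_eq_mul, mul_comm]; rfl
        intro x hx
        have hcx : c ≤ |S x| := hx
        have hSx : S x ≠ 0 := by
          intro h
          rw [h, abs_zero] at hcx
          linarith
        have h5 : |Φ x| ≤ 2 * ε / |S x| := osc_bound' hε0 hε1.le hSx
        have h6 : 2*ε/|S x| ≤ 2*ε/c := by
          gcongr
        have h7 := le_of_abs_le (h5.trans h6)
        linarith
      have h7 : ∫ x, (ε^ε/ε - Φ x) ∂μ = ε^ε/ε - ∫ x, Φ x ∂μ := by
        rw [integral_sub (integrable_const _) hΦint, integral_const]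
        simp
      rw [h7] at hstep1
      have h8 := mul_le_mul_of_nonneg_left hstep1 hε0.le
      have hne : (ε : ℝ) ≠ 0 := hε0.ne'
      calc (ε^ε - ε*(2*ε/c)) * (μ {x : Euc n | c ≤ |S x|}).toReal
          = ε * ((ε^ε/ε - 2*ε/c) * (μ {x : Euc n | c ≤ |S x|}).toReal) := by
            field_simp
        _ ≤ ε * (ε^ε/ε - ∫ x, Φ x ∂μ) := h8
        _ = ε^ε - ε * ∫ x, Φ x ∂μ := by field_simp
        _ = ε^ε - ε * ∫ t in Ioi (1/ε), t ^ (-1-ε) * f t := by rw [hswap]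
    -- Step 1b : pass to the limit ε → 0⁺
    set T := (μ {x : Euc n | c ≤ |S x|}).toReal with hT
    have hTnn : 0 ≤ T := ENNReal.toReal_nonneg
    have hL1 : Tendsto (fun ε : ℝ => (ε^ε - ε*(2*ε/c)) * T)
        (nhdsWithin 0 (Ioi 0)) (nhds T) := by
      have hcont : Continuous fun ε : ℝ => ε * (2*ε/c) :=
        continuous_id.mul ((continuous_const.mul continuous_id).div_const c)
      have h2 : Tendsto (fun ε : ℝ => ε * (2*ε/c)) (nhdsWithin 0 (Ioi 0)) (nhds 0) := by
        have h3 := hcont.tendsto 0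
        simp only [mul_zero, zero_mul, zero_div] at h3
        exact h3.mono_left nhdsWithin_le_nhds
      have h4 := (hεε.sub h2).mul_const T
      simpa using h4
    have hL2 : Tendsto (fun ε : ℝ => ε^ε - ε * ∫ t in Ioi (1/ε), t ^ (-1-ε) * f t)
        (nhdsWithin 0 (Ioi 0)) (nhds 0) := by
      have h := hεε.sub hψ
      simpa using h
    have hle : T ≤ 0 := by
      refine le_of_tendsto_of_tendsto hL1 hL2 ?_
      filter_upwards [Ioo_mem_nhdsGT_of_mem (show (0:ℝ) ∈ Ico (0:ℝ) 1 by norm_num)] with ε hε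
      exact hKey ε hε
    have hT0 : T = 0 := le_antisymm hle hTnn
    rcases (ENNReal.toReal_eq_zero_iff _).mp hT0 with h | h
    · exact h
    · exact absurd h hμA_ne
  -- Step 2 : for every a ≠ 0, ⟨a,x⟩ = 0 for μ-a.e. x
  have key2 : ∀ a : Euc n, a ≠ 0 → μ {x : Euc n | (inner ℝ a x : ℝ) ≠ 0} = 0 := by
    intro a ha
    have hNa := hNpos a ha
    have hNb : N ((N a)⁻¹ • a) = 1 := by
      rw [hNhom _ _ (inv_nonneg.mpr hNa.le), inv_mul_cancel₀ hNa.ne']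
    have hsub : {x : Euc n | (inner ℝ a x : ℝ) ≠ 0}
        ⊆ ⋃ k : ℕ, {x : Euc n | 1/(k+1) ≤ |(inner ℝ ((N a)⁻¹ • a) x : ℝ)|} := by
      intro x hx
      have hbx : (inner ℝ ((N a)⁻¹ • a) x : ℝ) ≠ 0 := by
        rw [real_inner_smul_left]
        exact mul_ne_zero (inv_ne_zero hNa.ne') hx
      obtain ⟨k, hk⟩ := exists_nat_one_div_lt (abs_pos.mpr hbx)
      exact mem_iUnion.mpr ⟨k, hk.le⟩
    refine measure_mono_null hsub (measure_iUnion_null fun k => key _ hNb _ ?_)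
    positivity
  -- Step 3 : conclude
  have hsub0 : ({0}ᶜ : Set (Euc n))
      ⊆ ⋃ i : Fin n, {x : Euc n | (inner ℝ (EuclideanSpace.single i (1:ℝ)) x : ℝ) ≠ 0} := by
    intro x hx
    have hx0 : x ≠ 0 := hx
    have hex : ∃ i, x i ≠ 0 := by
      by_contra h
      push_neg at h
      exact hx0 (by ext i; exact h i)
    obtain ⟨i, hi⟩ := hex
    refine mem_iUnion.mpr ⟨i, ?_⟩
    simpa [EuclideanSpace.inner_single_left] using hi
  have h0 : μ ({0}ᶜ : Set (Euc n)) = 0 := by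
    refine measure_mono_null hsub0 (measure_iUnion_null fun i => key2 _ ?_)
    intro h
    have h2 := congrArg (fun v : Euc n => v i) h
    simp [EuclideanSpace.single_apply] at h2
  exact (prob_compl_eq_zero_iff (measurableSet_singleton 0)).mp h0
end
end
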